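/- arXiv:2112.15410 — 9 statements merged into one kernel-verified Lean document; each statement's English description precedes it below -/
import Mathlib

section
/- Let a, b, c ≥ 0 be real numbers with c² ≥ a² + μb² for some μ ≥ 1, and suppose a² ≥ l·b² for some l ≥ 1. Then for all α ≥ 2, c^α ≥ a^α + ((μ+l)^{α/2} - l^{α/2})·b^α. -/
open Real

lemma aux_mono (d t : ℝ) (hd : 0 ≤ d) (ht : 1 ≤ t) {v u : ℝ} (hv : 0 < v) (hvu : v ≤ u) :
    (v + d) ^ t - v ^ t ≤ (u + d) ^ t - u ^ t := by
  have hmono : MonotoneOn (fun x : ℝ => (x + d) ^ t - x ^ t) (Set.Ici v) := by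
    have hderiv : ∀ x ∈ Set.Ioi v,
        HasDerivAt (fun x : ℝ => (x + d) ^ t - x ^ t)
          (t * (x + d) ^ (t - 1) - t * x ^ (t - 1)) x := by
      intro x hx
      have hx0 : 0 < x := lt_of_le_of_lt hv.le hx
      have h1 : HasDerivAt (fun x : ℝ => (x + d) ^ t) (t * (x + d) ^ (t - 1)) x := by
        have := (Real.hasDerivAt_rpow_const (p := t)
          (Or.inl (by positivity : (x + d) ≠ 0))).comp x ((hasDerivAt_id x).add_const d)
        simpa [Function.comp_def] using this
      have h2 : HasDerivAt (fun x : ℝ => x ^ t) (t * x ^ (t - 1)) x :=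
        Real.hasDerivAt_rpow_const (Or.inl hx0.ne')
      exact h1.sub h2
    apply monotoneOn_of_deriv_nonneg (convex_Ici v)
    · apply ContinuousOn.sub
      · exact ((continuous_id.add continuous_const).continuousOn).rpow_const
          (fun x _ => Or.inr (by linarith))
      · exact continuousOn_id.rpow_const (fun x _ => Or.inr (by linarith))
    · intro x hx
      rw [interior_Ici] at hx
      exact (hderiv x hx).differentiableAt.differentiableWithinAt
    · intro x hx
      rw [interior_Ici] at hx
      rw [(hderiv x hx).deriv]
      have hx0 : 0 < x := lt_of_le_of_lt hv.le hx
      have : x ^ (t - 1) ≤ (x + d) ^ (t - 1) :=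
        Real.rpow_le_rpow hx0.le (by linarith) (by linarith)
      nlinarith [this, (by linarith : (0:ℝ) ≤ t)]
  exact hmono (Set.self_mem_Ici) hvu (by simpa using hvu)

theorem stmt_3 (a b c μ l α : ℝ) (ha : 0 ≤ a) (hb : 0 ≤ b) (hc : 0 ≤ c)
    (hμ : 1 ≤ μ) (hl : 1 ≤ l)
    (h1 : a ^ (2:ℝ) + μ * b ^ (2:ℝ) ≤ c ^ (2:ℝ))
    (h2 : l * b ^ (2:ℝ) ≤ a ^ (2:ℝ))
    (hα : 2 ≤ α) :
    c ^ α ≥ a ^ α + ((μ + l) ^ (α / 2) - l ^ (α / 2)) * b ^ α := by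
  set t := α / 2 with ht_def
  have ht : 1 ≤ t := by unfold t; linarith
  have htα : 2 * t = α := by unfold t; ring
  have hcα : c ^ α = (c ^ (2:ℝ)) ^ t := by
    rw [← Real.rpow_mul hc, htα]
  have haα : a ^ α = (a ^ (2:ℝ)) ^ t := by
    rw [← Real.rpow_mul ha, htα]
  have hbα : b ^ α = (b ^ (2:ℝ)) ^ t := by
    rw [← Real.rpow_mul hb, htα]
  rcases eq_or_lt_of_le hb with hb0 | hb0
  · -- b = 0
    have hb0 : b = 0 := hb0.symm
    subst hb0
    have h0 : (0:ℝ) ^ α = 0 := Real.zero_rpow (by linarith)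
    rw [h0, mul_zero, add_zero]
    have h0' : (0:ℝ) ^ (2:ℝ) = 0 := Real.zero_rpow (by norm_num)
    rw [h0', mul_zero, add_zero] at h1
    rw [hcα, haα]
    exact Real.rpow_le_rpow (Real.rpow_nonneg ha 2) h1 (by linarith)
  · -- b > 0
    have hb2 : 0 < b ^ (2:ℝ) := Real.rpow_pos_of_pos hb0 2
    have hv : 0 < l * b ^ (2:ℝ) := by positivity
    have hd : 0 ≤ μ * b ^ (2:ℝ) := by positivity
    have key := aux_mono (μ * b ^ (2:ℝ)) t hd ht hv h2
    have hstep : (a ^ (2:ℝ) + μ * b ^ (2:ℝ)) ^ t ≤ (c ^ (2:ℝ)) ^ t :=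
      Real.rpow_le_rpow (by positivity) h1 (by linarith)
    have hsum : l * b ^ (2:ℝ) + μ * b ^ (2:ℝ) = (μ + l) * b ^ (2:ℝ) := by ring
    rw [hsum] at key
    have hmul1 : ((μ + l) * b ^ (2:ℝ)) ^ t = (μ + l) ^ t * (b ^ (2:ℝ)) ^ t :=
      Real.mul_rpow (by linarith) hb2.le
    have hmul2 : (l * b ^ (2:ℝ)) ^ t = l ^ t * (b ^ (2:ℝ)) ^ t :=
      Real.mul_rpow (by linarith) hb2.le
    rw [hmul1, hmul2] at key
    rw [hcα, haα, hbα, ge_iff_le]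
    calc (a ^ (2:ℝ)) ^ t + ((μ + l) ^ t - l ^ t) * (b ^ (2:ℝ)) ^ t
        = (a ^ (2:ℝ)) ^ t + ((μ + l) ^ t * (b ^ (2:ℝ)) ^ t - l ^ t * (b ^ (2:ℝ)) ^ t) := by ring
      _ ≤ (a ^ (2:ℝ) + μ * b ^ (2:ℝ)) ^ t := by linarith
      _ ≤ (c ^ (2:ℝ)) ^ t := hstep
end

section
/- Let a, b ≥ 0 with a² ≥ l·b² for l ≥ 1, let μ ≥ 1, and α ≥ 2. Then (a² + μb²)^{α/2} ≥ a^α + ((μ+l)^{α/2} - l^{α/2})·b^α. -/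
lemma stmt_4_aux (c p : ℝ) (hc : 0 ≤ c) (hp : 1 ≤ p) :
    MonotoneOn (fun x : ℝ => (x + c) ^ p - x ^ p) (Set.Ici 0) := by
  have hder : ∀ x : ℝ, HasDerivAt (fun x : ℝ => (x + c) ^ p - x ^ p)
      (1 * p * (x + c) ^ (p - 1) - 1 * p * x ^ (p - 1)) x := by
    intro x
    exact (((hasDerivAt_id x).add_const c).rpow_const (Or.inr hp)).sub
      ((hasDerivAt_id x).rpow_const (Or.inr hp))
  apply monotoneOn_of_deriv_nonneg (convex_Ici 0)
  · exact (continuous_iff_continuousAt.2 fun x => (hder x).continuousAt).continuousOn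
  · intro x hx
    exact (hder x).differentiableAt.differentiableWithinAt
  · intro x hx
    rw [interior_Ici] at hx
    rw [(hder x).deriv]
    simp only [one_mul]
    have hx0 : (0:ℝ) ≤ x := le_of_lt hx
    have hle : x ^ (p - 1) ≤ (x + c) ^ (p - 1) :=
      Real.rpow_le_rpow hx0 (by linarith) (by linarith)
    nlinarith [hle, hp]

theorem stmt_4 (a b μ l α : ℝ) (ha : 0 ≤ a) (hb : 0 ≤ b)
    (hμ : 1 ≤ μ) (hl : 1 ≤ l)
    (h : l * b ^ (2:ℝ) ≤ a ^ (2:ℝ))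
    (hα : 2 ≤ α) :
    (a ^ (2:ℝ) + μ * b ^ (2:ℝ)) ^ (α / 2) ≥
      a ^ α + ((μ + l) ^ (α / 2) - l ^ (α / 2)) * b ^ α := by
  set p := α / 2 with hpdef
  have hp : 1 ≤ p := by simp [hpdef]; linarith
  have hb2 : (0:ℝ) ≤ b ^ (2:ℝ) := Real.rpow_nonneg hb 2
  have hy : l * b ^ (2:ℝ) ∈ Set.Ici (0:ℝ) := by
    have : (0:ℝ) ≤ l := by linarith
    exact mul_nonneg this hb2
  have hx : a ^ (2:ℝ) ∈ Set.Ici (0:ℝ) := Real.rpow_nonneg ha 2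
  have hmono := stmt_4_aux (μ * b ^ (2:ℝ)) p (mul_nonneg (by linarith) hb2) hp hy hx h
  simp only at hmono
  have haα : (a ^ (2:ℝ)) ^ p = a ^ α := by
    rw [← Real.rpow_mul ha, hpdef]
    congr 1; ring
  have hbα : (b ^ (2:ℝ)) ^ p = b ^ α := by
    rw [← Real.rpow_mul hb, hpdef]
    congr 1; ring
  have hlb : (l * b ^ (2:ℝ)) ^ p = l ^ p * b ^ α := by
    rw [Real.mul_rpow (by linarith) hb2, hbα]
  have hsum : (l * b ^ (2:ℝ) + μ * b ^ (2:ℝ)) ^ p = (μ + l) ^ p * b ^ α := by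
    have : l * b ^ (2:ℝ) + μ * b ^ (2:ℝ) = (μ + l) * b ^ (2:ℝ) := by ring
    rw [this, Real.mul_rpow (by linarith) hb2, hbα]
  rw [hlb, hsum, haα] at hmono
  linarith
end

section
/- Let N ≥ 2 and let c₀, c₁, ..., c_{N-1} ≥ 0 be real numbers. Suppose there are reals μᵢ ≥ 1, lᵢ ≥ 1 and partial 'tail' values d₁, ..., d_{N-1} ≥ 0 with d_{N-1} = c_{N-1}, and for each 1 ≤ i ≤ N-2: cᵢ² ≥ lᵢ·dᵢ₊₁² and dᵢ² ≥ cᵢ² + μᵢ·dᵢ₊₁². Then for all α ≥ 2, d₁^α ≥ c₁^α + K₁·c₂^α + K₁K₂·c₃^α + ... + K₁⋯K_{N-2}·c_{N-1}^α, where Kᵣ = (μᵣ+lᵣ)^{α/2} - lᵣ^{α/2}. -/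
lemma convex_diff (t : ℝ) (ht : 1 ≤ t) {z A B : ℝ} (hz : 0 ≤ z) (hB : 0 ≤ B) (hBA : B ≤ A) :
    (B + z) ^ t - B ^ t ≤ (A + z) ^ t - A ^ t := by
  have hf := convexOn_rpow ht
  rcases eq_or_lt_of_le (show B ≤ A + z by linarith) with h | h
  · have hz0 : z = 0 := by nlinarith
    have hAB : A = B := by nlinarith
    simp [hz0, hAB]
  · set D := A + z - B with hD
    have hD0 : 0 < D := by simp [hD]; linarith
    set lam := z / D with hlam
    set mu := (A - B) / D with hmu
    have hlam0 : 0 ≤ lam := div_nonneg hz hD0.le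
    have hmu0 : 0 ≤ mu := div_nonneg (by linarith) hD0.le
    have hsum : mu + lam = 1 := by
      rw [hlam, hmu, hD]; field_simp [show A + z - B ≠ 0 from ne_of_gt (by linarith)]; ring
    have hBm : B ∈ Set.Ici (0:ℝ) := hB
    have hAzm : A + z ∈ Set.Ici (0:ℝ) := by simp; linarith
    have e1 : mu * B + lam * (A + z) = B + z := by
      rw [hlam, hmu, hD]; field_simp [show A + z - B ≠ 0 from ne_of_gt (by linarith)]; ring
    have e2 : lam * B + mu * (A + z) = A := by
      rw [hlam, hmu, hD]; field_simp [show A + z - B ≠ 0 from ne_of_gt (by linarith)]; ring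
    have H1 := hf.2 hBm hAzm hmu0 hlam0 hsum
    have H2 := hf.2 hBm hAzm hlam0 hmu0 (by linarith)
    simp only [smul_eq_mul] at H1 H2
    rw [e1] at H1
    rw [e2] at H2
    have hBt : mu * B ^ t + lam * B ^ t = B ^ t := by rw [← add_mul, hsum, one_mul]
    have hAt : lam * (A + z) ^ t + mu * (A + z) ^ t = (A + z) ^ t := by
      rw [← add_mul]; rw [show lam + mu = 1 by linarith, one_mul]
    linarith

lemma step_ineq (t : ℝ) (ht : 1 ≤ t) {x y μ l : ℝ} (hx : 0 ≤ x) (hy : 0 ≤ y)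
    (hl : 0 ≤ l) (hμ : 0 ≤ μ) (hxy : l * y ≤ x) :
    x ^ t + ((μ + l) ^ t - l ^ t) * y ^ t ≤ (x + μ * y) ^ t := by
  have key := convex_diff t ht (z := x - l * y) (A := (l + μ) * y) (B := l * y)
    (by linarith) (mul_nonneg hl hy) (by nlinarith)
  have e1 : l * y + (x - l * y) = x := by ring
  have e2 : (l + μ) * y + (x - l * y) = x + μ * y := by ring
  rw [e1, e2] at key
  rw [Real.mul_rpow hl hy, Real.mul_rpow (by linarith : (0:ℝ) ≤ l + μ) hy] at key
  have : (μ + l) = (l + μ) := by ring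
  rw [this]
  nlinarith [key]

theorem stmt_7 (N : ℕ) (hN : 2 ≤ N) (c d μ l : ℕ → ℝ)
    (hc : ∀ i, 1 ≤ i → i ≤ N - 1 → 0 ≤ c i)
    (hd : ∀ i, 1 ≤ i → i ≤ N - 1 → 0 ≤ d i)
    (hμ : ∀ i, 1 ≤ i → i ≤ N - 2 → 1 ≤ μ i)
    (hl : ∀ i, 1 ≤ i → i ≤ N - 2 → 1 ≤ l i)
    (hlast : d (N - 1) = c (N - 1))
    (h1 : ∀ i, 1 ≤ i → i ≤ N - 2 → l i * d (i + 1) ^ (2:ℝ) ≤ c i ^ (2:ℝ))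
    (h2 : ∀ i, 1 ≤ i → i ≤ N - 2 →
      c i ^ (2:ℝ) + μ i * d (i + 1) ^ (2:ℝ) ≤ d i ^ (2:ℝ))
    (α : ℝ) (hα : 2 ≤ α) :
    d 1 ^ α ≥ ∑ i ∈ Finset.Icc 1 (N - 1),
      (∏ r ∈ Finset.Icc 1 (i - 1),
        ((μ r + l r) ^ (α / 2) - (l r) ^ (α / 2))) * c i ^ α := by
  set t := α / 2 with htdef
  have ht : 1 ≤ t := by simp [htdef]; linarith
  have ht0 : (0:ℝ) ≤ t := by linarith
  set K : ℕ → ℝ := fun r => (μ r + l r) ^ t - (l r) ^ t with hK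
  -- K is nonneg on the relevant range
  have hKnn : ∀ r, 1 ≤ r → r ≤ N - 2 → 0 ≤ K r := by
    intro r hr1 hr2
    have hlr := hl r hr1 hr2
    have hμr := hμ r hr1 hr2
    have : (l r) ^ t ≤ (μ r + l r) ^ t :=
      Real.rpow_le_rpow (by linarith) (by linarith) ht0
    simp [hK]; linarith
  -- one step inequality
  have hstep : ∀ i, 1 ≤ i → i ≤ N - 2 →
      c i ^ α + K i * d (i + 1) ^ α ≤ d i ^ α := by
    intro i hi1 hi2
    have hci : 0 ≤ c i := hc i hi1 (by omega)
    have hdi : 0 ≤ d i := hd i hi1 (by omega)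
    have hdi1 : 0 ≤ d (i + 1) := hd (i + 1) (by omega) (by omega)
    have hlr := hl i hi1 hi2
    have hμr := hμ i hi1 hi2
    have hx : 0 ≤ c i ^ (2:ℝ) := Real.rpow_nonneg hci _
    have hy : 0 ≤ d (i+1) ^ (2:ℝ) := Real.rpow_nonneg hdi1 _
    have e : ∀ x : ℝ, 0 ≤ x → x ^ α = (x ^ (2:ℝ)) ^ t := by
      intro x hx0
      rw [← Real.rpow_mul hx0]
      congr 1
      simp [htdef]; ring
    rw [e _ hci, e _ hdi, e _ hdi1]
    have step1 := step_ineq t ht hx hy (by linarith : (0:ℝ) ≤ l i)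
      (by linarith : (0:ℝ) ≤ μ i) (h1 i hi1 hi2)
    have step2 : (c i ^ (2:ℝ) + μ i * d (i+1) ^ (2:ℝ)) ^ t ≤ (d i ^ (2:ℝ)) ^ t :=
      Real.rpow_le_rpow (by positivity) (h2 i hi1 hi2) ht0
    simp only [hK]
    linarith
  -- downward induction
  have aux : ∀ m i, 1 ≤ i → i + m = N - 1 →
      ∑ j ∈ Finset.Icc i (N - 1), (∏ r ∈ Finset.Icc i (j - 1), K r) * c j ^ α
        ≤ d i ^ α := by
    intro m
    induction m with
    | zero =>
      intro i hi1 him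
      have hiN : i = N - 1 := by omega
      subst hiN
      rw [Finset.Icc_self, Finset.sum_singleton,
        Finset.Icc_eq_empty (by omega : ¬ (N - 1 ≤ N - 1 - 1)), Finset.prod_empty, one_mul,
        hlast]
    | succ m ih =>
      intro i hi1 him
      have hi2 : i ≤ N - 2 := by omega
      have hIH := ih (i + 1) (by omega) (by omega)
      have hsplit : Finset.Icc i (N - 1) = insert i (Finset.Icc (i + 1) (N - 1)) := by
        ext x; simp [Finset.mem_Icc, Finset.mem_insert]; omega
      rw [hsplit, Finset.sum_insert (by simp)]
      rw [Finset.Icc_eq_empty (by omega : ¬ (i ≤ i - 1)), Finset.prod_empty, one_mul]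
      have hprod : ∀ j ∈ Finset.Icc (i + 1) (N - 1),
          (∏ r ∈ Finset.Icc i (j - 1), K r) * c j ^ α
            = K i * ((∏ r ∈ Finset.Icc (i + 1) (j - 1), K r) * c j ^ α) := by
        intro j hj
        simp only [Finset.mem_Icc] at hj
        have : Finset.Icc i (j - 1) = insert i (Finset.Icc (i + 1) (j - 1)) := by
          ext x; simp [Finset.mem_Icc, Finset.mem_insert]; omega
        rw [this, Finset.prod_insert (by simp)]
        ring
      rw [Finset.sum_congr rfl hprod, ← Finset.mul_sum]
      have hKi := hKnn i hi1 hi2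
      have hmul : K i * (∑ j ∈ Finset.Icc (i + 1) (N - 1),
          (∏ r ∈ Finset.Icc (i + 1) (j - 1), K r) * c j ^ α) ≤ K i * d (i + 1) ^ α :=
        mul_le_mul_of_nonneg_left hIH hKi
      have := hstep i hi1 hi2
      linarith
  have := aux (N - 2) 1 le_rfl (by omega)
  simpa [hK, htdef] using this
end

section
/- Let a, b, c ≥ 0 be real numbers with c^{√2} ≥ a^{√2} + μ·b^{√2} for some μ ≥ 1, and a^{√2} ≥ l·b^{√2} for some l ≥ 1. Then for all α ≥ √2, c^α ≥ a^α + ((μ+l)^{α/√2} - l^{α/√2})·b^α. -/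
open Real Set

lemma mono_aux (z t : ℝ) (hz : 0 ≤ z) (ht : 1 ≤ t) :
    MonotoneOn (fun x : ℝ => (x + z) ^ t - x ^ t) (Ici 0) := by
  have hcont : ContinuousOn (fun x : ℝ => (x + z) ^ t - x ^ t) (Ici 0) := by
    apply ContinuousOn.sub
    · exact ContinuousOn.rpow_const (continuous_id.add continuous_const).continuousOn
        (fun x _ => Or.inr (by linarith))
    · exact ContinuousOn.rpow_const continuousOn_id (fun x _ => Or.inr (by linarith))
  apply monotoneOn_of_deriv_nonneg (convex_Ici 0) hcont
  · intro x hx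
    rw [interior_Ici] at hx
    have hd1 : HasDerivAt (fun x : ℝ => (x + z) ^ t) (t * (x + z) ^ (t - 1) * 1) x :=
      (Real.hasDerivAt_rpow_const (Or.inr ht)).comp x ((hasDerivAt_id x).add_const z)
    have hd2 : HasDerivAt (fun x : ℝ => x ^ t) (t * x ^ (t - 1)) x :=
      Real.hasDerivAt_rpow_const (Or.inr ht)
    exact (hd1.sub hd2).differentiableAt.differentiableWithinAt
  · intro x hx
    rw [interior_Ici] at hx
    have hx0 : (0:ℝ) < x := hx
    have hd1 : HasDerivAt (fun x : ℝ => (x + z) ^ t) (t * (x + z) ^ (t - 1) * 1) x :=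
      (Real.hasDerivAt_rpow_const (Or.inr ht)).comp x ((hasDerivAt_id x).add_const z)
    have hd2 : HasDerivAt (fun x : ℝ => x ^ t) (t * x ^ (t - 1)) x :=
      Real.hasDerivAt_rpow_const (Or.inr ht)
    have : deriv (fun x : ℝ => (x + z) ^ t - x ^ t) x = t * (x + z) ^ (t - 1) * 1 - t * x ^ (t - 1) :=
      (hd1.sub hd2).deriv
    rw [this]
    have hle : x ^ (t - 1) ≤ (x + z) ^ (t - 1) :=
      Real.rpow_le_rpow hx0.le (by linarith) (by linarith)
    nlinarith

theorem stmt_8 (a b c μ l α : ℝ) (ha : 0 ≤ a) (hb : 0 ≤ b) (hc : 0 ≤ c)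
    (hμ : 1 ≤ μ) (hl : 1 ≤ l)
    (h1 : a ^ (Real.sqrt 2) + μ * b ^ (Real.sqrt 2) ≤ c ^ (Real.sqrt 2))
    (h2 : l * b ^ (Real.sqrt 2) ≤ a ^ (Real.sqrt 2))
    (hα : Real.sqrt 2 ≤ α) :
    c ^ α ≥ a ^ α +
      ((μ + l) ^ (α / Real.sqrt 2) - l ^ (α / Real.sqrt 2)) * b ^ α := by
  have h2pos : (0:ℝ) < Real.sqrt 2 := Real.sqrt_pos.mpr (by norm_num)
  set s := Real.sqrt 2 with hs
  set t := α / s with htdef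
  have ht1 : 1 ≤ t := (one_le_div h2pos).mpr hα
  have ht0 : 0 ≤ t := by linarith
  have hst : s * t = α := by rw [mul_comm]; exact div_mul_cancel₀ _ h2pos.ne'
  have hrw : ∀ x : ℝ, 0 ≤ x → x ^ α = (x ^ s) ^ t := by
    intro x hx
    rw [← hst, Real.rpow_mul hx]
  set A := a ^ s with hA
  set B := b ^ s with hB
  set C := c ^ s with hC
  have hA0 : 0 ≤ A := Real.rpow_nonneg ha _
  have hB0 : 0 ≤ B := Real.rpow_nonneg hb _
  have key := mono_aux (μ * B) t (by nlinarith) ht1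
    (show l * B ∈ Ici (0:ℝ) from mem_Ici.mpr (by nlinarith))
    (show A ∈ Ici (0:ℝ) from hA0) h2
  simp only at key
  have e2 : (l * B + μ * B) ^ t = (μ + l) ^ t * B ^ t := by
    rw [show l * B + μ * B = (μ + l) * B by ring, Real.mul_rpow (by linarith) hB0]
  have e3 : (l * B) ^ t = l ^ t * B ^ t := Real.mul_rpow (by linarith) hB0
  have e4 : (A + μ * B) ^ t ≤ C ^ t := Real.rpow_le_rpow (by nlinarith) h1 ht0
  rw [hrw a ha, hrw b hb, hrw c hc]
  rw [e2, e3] at key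
  nlinarith
end

section
/- Let a, b, c ≥ 0 be real numbers with c ≤ a + μ·b for some 0 < μ ≤ 1, and a ≥ l·b for some l ≥ 1. Then for all real 0 ≤ α ≤ 1, c^α ≤ a^α + ((μ+l)^α - l^α)·b^α. -/
lemma concave_exchange {g : ℝ → ℝ} (hg : ConcaveOn ℝ (Set.Ici 0) g)
    {m x y M : ℝ} (hm : 0 ≤ m) (hmx : m ≤ x) (hmy : m ≤ y)
    (hsum : x + y = m + M) : g M + g m ≤ g x + g y := by
  have hxM : x ≤ M := by linarith
  have hyM : y ≤ M := by linarith
  rcases eq_or_lt_of_le (le_trans hmx hxM : m ≤ M) with h | hd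
  · have hx : x = m := le_antisymm (h ▸ hxM) hmx
    have hy : y = m := le_antisymm (h ▸ hyM) hmy
    rw [hx, hy, ← h]
  · have hd' : (0:ℝ) < M - m := by linarith
    set θ := (M - x) / (M - m) with hθ
    have hθ0 : 0 ≤ θ := div_nonneg (by linarith) hd'.le
    have hθ1 : θ ≤ 1 := by
      rw [div_le_one hd']; linarith
    have hcan : θ * (M - m) = M - x := div_mul_cancel₀ _ (ne_of_gt hd')
    have hmem : m ∈ Set.Ici (0:ℝ) := hm
    have hMem : M ∈ Set.Ici (0:ℝ) := by simp; linarith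
    have h1 := hg.2 hmem hMem hθ0 (by linarith : (0:ℝ) ≤ 1 - θ) (by ring)
    have h2 := hg.2 hmem hMem (by linarith : (0:ℝ) ≤ 1 - θ) hθ0 (by ring)
    simp only [smul_eq_mul] at h1 h2
    have e1 : θ * m + (1 - θ) * M = x := by nlinarith
    have e2 : (1 - θ) * m + θ * M = y := by nlinarith
    rw [e1] at h1; rw [e2] at h2
    linarith

theorem stmt_10 (a b c μ l α : ℝ) (ha : 0 ≤ a) (hb : 0 ≤ b) (hc : 0 ≤ c)
    (hμ0 : 0 < μ) (hμ1 : μ ≤ 1) (hl : 1 ≤ l)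
    (h1 : c ≤ a + μ * b) (h2 : l * b ≤ a)
    (hα0 : 0 ≤ α) (hα1 : α ≤ 1) :
    c ^ α ≤ a ^ α + ((μ + l) ^ α - l ^ α) * b ^ α := by
  have hg : ConcaveOn ℝ (Set.Ici 0) fun x : ℝ ↦ x ^ α := Real.concaveOn_rpow hα0 hα1
  have key : (a + μ * b) ^ α + (l * b) ^ α ≤ a ^ α + ((μ + l) * b) ^ α := by
    have := concave_exchange hg (m := l * b) (x := a) (y := (μ + l) * b)
      (M := a + μ * b) (by positivity) h2
      (by nlinarith) (by ring)
    simpa using this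
  have hcM : c ^ α ≤ (a + μ * b) ^ α := Real.rpow_le_rpow hc h1 hα0
  have hmul1 : ((μ + l) * b) ^ α = (μ + l) ^ α * b ^ α :=
    Real.mul_rpow (by linarith) hb
  have hmul2 : (l * b) ^ α = l ^ α * b ^ α := Real.mul_rpow (by linarith) hb
  rw [hmul1, hmul2] at key
  linarith
end

section
/- Let a, b ≥ 0 with a ≥ l·b for l ≥ 1, let 0 < μ ≤ 1, and 0 ≤ α ≤ 1. Then (a + μb)^α ≤ a^α + ((μ+l)^α - l^α)·b^α. -/
lemma aux_deriv (c α : ℝ) (hc : 0 < c) (hα0 : 0 ≤ α) (hα1 : α ≤ 1) {x : ℝ} (hx : 0 < x) :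
    HasDerivAt (fun t : ℝ => (t + c) ^ α - t ^ α)
      (α * (x + c) ^ (α - 1) - α * x ^ (α - 1)) x := by
  have h1 : HasDerivAt (fun t : ℝ => (t + c) ^ α) (α * (x + c) ^ (α - 1) * 1) x := by
    have := (Real.hasDerivAt_rpow_const (x := x + c) (p := α)
      (Or.inl (by positivity))).comp x ((hasDerivAt_id x).add_const c)
    exact this
  have h2 : HasDerivAt (fun t : ℝ => t ^ α) (α * x ^ (α - 1)) x :=
    Real.hasDerivAt_rpow_const (Or.inl hx.ne')
  simpa [Pi.sub_def] using h1.sub h2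

lemma aux_anti (c α : ℝ) (hc : 0 < c) (hα0 : 0 ≤ α) (hα1 : α ≤ 1) {s t : ℝ}
    (hs : 0 < s) (hst : s ≤ t) :
    (t + c) ^ α - t ^ α ≤ (s + c) ^ α - s ^ α := by
  have hanti : AntitoneOn (fun t : ℝ => (t + c) ^ α - t ^ α) (Set.Ici s) := by
    apply antitoneOn_of_deriv_nonpos (convex_Ici s)
    · exact fun x hx => ((aux_deriv c α hc hα0 hα1 (hs.trans_le hx)).continuousAt).continuousWithinAt
    · intro x hx
      rw [interior_Ici] at hx
      exact (aux_deriv c α hc hα0 hα1 (hs.trans hx)).differentiableAt.differentiableWithinAt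
    · intro x hx
      rw [interior_Ici] at hx
      have hx0 : 0 < x := hs.trans hx
      rw [(aux_deriv c α hc hα0 hα1 hx0).deriv]
      have : (x + c) ^ (α - 1) ≤ x ^ (α - 1) :=
        Real.rpow_le_rpow_of_nonpos hx0 (by linarith) (by linarith)
      nlinarith
  exact hanti (Set.self_mem_Ici) hst hst

theorem stmt_11 (a b μ l α : ℝ) (ha : 0 ≤ a) (hb : 0 ≤ b)
    (hμ0 : 0 < μ) (hμ1 : μ ≤ 1) (hl : 1 ≤ l)
    (h : l * b ≤ a) (hα0 : 0 ≤ α) (hα1 : α ≤ 1) :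
    (a + μ * b) ^ α ≤ a ^ α + ((μ + l) ^ α - l ^ α) * b ^ α := by
  rcases eq_or_lt_of_le hb with hb0 | hb0
  · simp only [← hb0, mul_zero, add_zero, le_add_iff_nonneg_right]
    exact mul_nonneg (by
      have := Real.rpow_le_rpow (by linarith : (0:ℝ) ≤ l) (by linarith : l ≤ μ + l) hα0
      linarith) (Real.rpow_nonneg le_rfl α)
  · have hs : 0 < l * b := by positivity
    have key := aux_anti (μ * b) α (by positivity) hα0 hα1 hs h
    have e1 : l * b + μ * b = (μ + l) * b := by ring
    rw [e1, Real.mul_rpow (by positivity) hb, Real.mul_rpow (by positivity) hb] at key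
    linarith
end

section
/- Let a, b, c ≥ 0 with c ≥ a + μ·b for some μ ≥ 1, and a ≥ l·b for some l ≥ 1. Then for all α ≥ 1, c^α ≥ a^α + ((μ+l)^α - l^α)·b^α. -/
lemma convex_shift {g : ℝ → ℝ} (hg : ConvexOn ℝ (Set.Ici 0) g) {x y h : ℝ}
    (hy : 0 ≤ y) (hyx : y ≤ x) (hh : 0 ≤ h) : g x + g (y + h) ≤ g y + g (x + h) := by
  rcases eq_or_lt_of_le hh with rfl | hh
  · simp only [add_zero]; linarith
  have hs : 0 < x - y + h := by linarith
  set t1 : ℝ := (x - y) / (x - y + h) with ht1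
  set t2 : ℝ := h / (x - y + h) with ht2
  have h12 : t1 + t2 = 1 := by rw [ht1, ht2]; field_simp
  have ht1n : 0 ≤ t1 := div_nonneg (by linarith) hs.le
  have ht2n : 0 ≤ t2 := div_nonneg hh.le hs.le
  have hxh : x + h ∈ Set.Ici (0:ℝ) := by simp; linarith
  have hym : y ∈ Set.Ici (0:ℝ) := hy
  have e1 : t1 • y + t2 • (x + h) = y + h := by
    simp only [smul_eq_mul, ht1, ht2]; field_simp; ring
  have e2 : t2 • y + t1 • (x + h) = x := by
    simp only [smul_eq_mul, ht1, ht2]; field_simp; ring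
  have i1 := hg.2 hym hxh ht1n ht2n h12
  have i2 := hg.2 hym hxh ht2n ht1n (by linarith)
  rw [e1] at i1; rw [e2] at i2
  simp only [smul_eq_mul] at i1 i2
  calc g x + g (y + h) ≤ (t2 * g y + t1 * g (x + h)) + (t1 * g y + t2 * g (x + h)) :=
        add_le_add i2 i1
    _ = (t1 + t2) * g y + (t1 + t2) * g (x + h) := by ring
    _ = g y + g (x + h) := by rw [h12]; ring

theorem stmt_12 (a b c μ l α : ℝ) (ha : 0 ≤ a) (hb : 0 ≤ b) (hc : 0 ≤ c)
    (hμ : 1 ≤ μ) (hl : 1 ≤ l)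
    (h1 : a + μ * b ≤ c) (h2 : l * b ≤ a)
    (hα : 1 ≤ α) :
    c ^ α ≥ a ^ α + ((μ + l) ^ α - l ^ α) * b ^ α := by
  have hlb : 0 ≤ l * b := mul_nonneg (by linarith) hb
  have hμb : 0 ≤ μ * b := mul_nonneg (by linarith) hb
  have key := convex_shift (convexOn_rpow hα) hlb h2 hμb
  have e1 : l * b + μ * b = (l + μ) * b := by ring
  rw [e1] at key
  have m1 : (l * b) ^ α = l ^ α * b ^ α := Real.mul_rpow (by linarith) hb
  have m2 : ((l + μ) * b) ^ α = (l + μ) ^ α * b ^ α := Real.mul_rpow (by linarith) hb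
  rw [m1, m2] at key
  have hcc : (a + μ * b) ^ α ≤ c ^ α :=
    Real.rpow_le_rpow (by linarith) h1 (by linarith)
  have : (μ + l) ^ α = (l + μ) ^ α := by ring_nf
  rw [this]
  nlinarith [key, hcc]
end

section
/- Let N ≥ 2 and c₁,...,c_{N-1} ≥ 0, d₁,...,d_{N-1} ≥ 0 with d_{N-1} = c_{N-1}. Suppose for reals μᵢ ≥ 1, lᵢ ≥ 1 (1 ≤ i ≤ N-2): cᵢ ≥ lᵢ·dᵢ₊₁ and dᵢ ≥ cᵢ + μᵢ·dᵢ₊₁. Then for all α ≥ 1, d₁^α ≥ c₁^α + K₁c₂^α + K₁K₂c₃^α + ... + K₁⋯K_{N-2}c_{N-1}^α, where Kᵣ = (μᵣ+lᵣ)^α - lᵣ^α. -/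
open Finset

private lemma slope_key (α : ℝ) (hα : 1 ≤ α) {t x μ : ℝ} (ht : 0 ≤ t) (hμ : 0 < μ)
    (hx : t ≤ x) : (t + μ) ^ α - t ^ α ≤ (x + μ) ^ α - x ^ α := by
  rcases eq_or_lt_of_le hx with rfl | hlt
  · exact le_refl _
  have hconv := convexOn_rpow hα
  have hx0 : (0:ℝ) ≤ x := ht.trans hx
  have ht' : t ∈ Set.Ici (0:ℝ) := ht
  have hx' : x ∈ Set.Ici (0:ℝ) := hx0
  have htμ : t + μ ∈ Set.Ici (0:ℝ) := by simp only [Set.mem_Ici]; linarith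
  have hxμ : x + μ ∈ Set.Ici (0:ℝ) := by simp only [Set.mem_Ici]; linarith
  have h1 := hconv.secant_mono ht' htμ hxμ (by intro h; nlinarith [congrArg id h])
    (by intro h; nlinarith [congrArg id h]) (by linarith)
  have h2 := hconv.secant_mono hxμ ht' hx' (by intro h; nlinarith [congrArg id h])
    (by intro h; nlinarith [congrArg id h]) (by linarith)
  have h2' : ((x + μ) ^ α - t ^ α) / (x + μ - t) ≤ ((x + μ) ^ α - x ^ α) / μ := by
    have e1 : t - (x + μ) = -(x + μ - t) := by ring
    have e2 : t ^ α - (x + μ) ^ α = -((x + μ) ^ α - t ^ α) := by ring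
    have e3 : x - (x + μ) = -μ := by ring
    have e4 : x ^ α - (x + μ) ^ α = -((x + μ) ^ α - x ^ α) := by ring
    rw [e1, e2, e3, e4, neg_div_neg_eq, neg_div_neg_eq] at h2
    exact h2
  have h3 : ((t + μ) ^ α - t ^ α) / μ ≤ ((x + μ) ^ α - x ^ α) / μ := by
    refine le_trans ?_ h2'
    have : t + μ - t = μ := by ring
    rw [this] at h1
    exact h1
  exact (div_le_div_iff_of_pos_right hμ).mp h3

private lemma core (α : ℝ) (hα : 1 ≤ α) {a b lv μv : ℝ} (hb : 0 ≤ b) (hl : 1 ≤ lv)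
    (hμ : 1 ≤ μv) (hab : lv * b ≤ a) :
    a ^ α + ((μv + lv) ^ α - lv ^ α) * b ^ α ≤ (a + μv * b) ^ α := by
  rcases hb.eq_or_lt with rfl | hb0
  · simp [Real.zero_rpow (by positivity : α ≠ 0)]
  · have ha : 0 ≤ a := le_trans (by positivity) hab
    set x := a / b with hxdef
    have hax : a = x * b := by rw [hxdef, div_mul_cancel₀ _ hb0.ne']
    have hlx : lv ≤ x := (le_div_iff₀ hb0).mpr hab
    have key := slope_key α hα (t := lv) (x := x) (μ := μv) (by linarith) (by linarith) hlx
    have hx0 : 0 ≤ x := by linarith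
    have hbpow : 0 ≤ b ^ α := Real.rpow_nonneg hb0.le α
    have expand : (a + μv * b) ^ α = (x + μv) ^ α * b ^ α := by
      rw [show a + μv * b = (x + μv) * b by rw [hax]; ring,
        Real.mul_rpow (by linarith) hb0.le]
    have haexp : a ^ α = x ^ α * b ^ α := by
      rw [hax, Real.mul_rpow hx0 hb0.le]
    rw [expand, haexp]
    have : (lv + μv) ^ α - lv ^ α ≤ (x + μv) ^ α - x ^ α := key
    rw [show μv + lv = lv + μv by ring]
    nlinarith [this, hbpow]

private lemma main_aux (α : ℝ) (hα : 1 ≤ α) :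
    ∀ m : ℕ, 1 ≤ m → ∀ c d μ l : ℕ → ℝ,
    (∀ i, 1 ≤ i → i ≤ m → 0 ≤ c i) →
    (∀ i, 1 ≤ i → i ≤ m → 0 ≤ d i) →
    (∀ i, 1 ≤ i → i ≤ m - 1 → 1 ≤ μ i) →
    (∀ i, 1 ≤ i → i ≤ m - 1 → 1 ≤ l i) →
    d m = c m →
    (∀ i, 1 ≤ i → i ≤ m - 1 → l i * d (i + 1) ≤ c i) →
    (∀ i, 1 ≤ i → i ≤ m - 1 → c i + μ i * d (i + 1) ≤ d i) →
    ∑ i ∈ range m, (∏ r ∈ range i, ((μ (r+1) + l (r+1)) ^ α - (l (r+1)) ^ α)) * c (i+1) ^ α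
      ≤ d 1 ^ α := by
  intro m hm
  induction m, hm using Nat.le_induction with
  | base =>
    intro c d μ l hc hd hμ hl hlast h1 h2
    simpa using le_of_eq (by rw [hlast])
  | succ m hm IH =>
    intro c d μ l hc hd hμ hl hlast h1 h2
    have IH2 := IH (fun i => c (i+1)) (fun i => d (i+1)) (fun i => μ (i+1)) (fun i => l (i+1))
      (fun i hi hi' => hc (i+1) (by omega) (by omega))
      (fun i hi hi' => hd (i+1) (by omega) (by omega))
      (fun i hi hi' => hμ (i+1) (by omega) (by omega))
      (fun i hi hi' => hl (i+1) (by omega) (by omega))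
      hlast
      (fun i hi hi' => h1 (i+1) (by omega) (by omega))
      (fun i hi hi' => h2 (i+1) (by omega) (by omega))
    have IH2' : ∑ i ∈ range m, (∏ r ∈ range i,
        ((μ (r+2) + l (r+2)) ^ α - (l (r+2)) ^ α)) * c (i+2) ^ α ≤ d 2 ^ α := IH2
    have hl1 : 1 ≤ l 1 := hl 1 le_rfl (by omega)
    have hμ1 : 1 ≤ μ 1 := hμ 1 le_rfl (by omega)
    have hK1 : 0 ≤ (μ 1 + l 1) ^ α - (l 1) ^ α := by
      rw [sub_nonneg]
      exact Real.rpow_le_rpow (by linarith) (by linarith) (by linarith)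
    have hd2 : 0 ≤ d 2 := hd 2 (by omega) (by omega)
    have hc1 : l 1 * d 2 ≤ c 1 := h1 1 le_rfl (by omega)
    have hstep : c 1 + μ 1 * d 2 ≤ d 1 := h2 1 le_rfl (by omega)
    have hcore := core α hα hd2 hl1 hμ1 hc1
    have hmono : (c 1 + μ 1 * d 2) ^ α ≤ d 1 ^ α :=
      Real.rpow_le_rpow (by nlinarith) hstep (by linarith)
    calc ∑ i ∈ range (m+1),
          (∏ r ∈ range i, ((μ (r+1) + l (r+1)) ^ α - (l (r+1)) ^ α)) * c (i+1) ^ α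
        = (∑ i ∈ range m, ((μ 1 + l 1) ^ α - (l 1) ^ α) * ((∏ r ∈ range i,
            ((μ (r+2) + l (r+2)) ^ α - (l (r+2)) ^ α)) * c (i+2) ^ α)) + 1 * c 1 ^ α := by
          rw [Finset.sum_range_succ']
          congr 1
          · exact Finset.sum_congr rfl fun i _ => by
              rw [Finset.prod_range_succ']; ring
      _ = ((μ 1 + l 1) ^ α - (l 1) ^ α) * (∑ i ∈ range m, (∏ r ∈ range i,
            ((μ (r+2) + l (r+2)) ^ α - (l (r+2)) ^ α)) * c (i+2) ^ α) + c 1 ^ α := by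
          rw [Finset.mul_sum]; ring
      _ ≤ ((μ 1 + l 1) ^ α - (l 1) ^ α) * d 2 ^ α + c 1 ^ α := by
          have := mul_le_mul_of_nonneg_left IH2' hK1
          linarith
      _ ≤ (c 1 + μ 1 * d 2) ^ α := by linarith [hcore]
      _ ≤ d 1 ^ α := hmono

theorem stmt_13 (N : ℕ) (hN : 2 ≤ N) (c d μ l : ℕ → ℝ)
    (hc : ∀ i, 1 ≤ i → i ≤ N - 1 → 0 ≤ c i)
    (hd : ∀ i, 1 ≤ i → i ≤ N - 1 → 0 ≤ d i)
    (hμ : ∀ i, 1 ≤ i → i ≤ N - 2 → 1 ≤ μ i)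
    (hl : ∀ i, 1 ≤ i → i ≤ N - 2 → 1 ≤ l i)
    (hlast : d (N - 1) = c (N - 1))
    (h1 : ∀ i, 1 ≤ i → i ≤ N - 2 → l i * d (i + 1) ≤ c i)
    (h2 : ∀ i, 1 ≤ i → i ≤ N - 2 → c i + μ i * d (i + 1) ≤ d i)
    (α : ℝ) (hα : 1 ≤ α) :
    d 1 ^ α ≥ ∑ i ∈ Finset.Icc 1 (N - 1),
      (∏ r ∈ Finset.Icc 1 (i - 1),
        ((μ r + l r) ^ α - (l r) ^ α)) * c i ^ α := by
  have hm : 1 ≤ N - 1 := by omega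
  have heq : N - 2 = N - 1 - 1 := by omega
  rw [heq] at hμ hl h1 h2
  have key := main_aux α hα (N - 1) hm c d μ l hc hd hμ hl hlast h1 h2
  refine le_trans (le_of_eq ?_) key
  rw [← Finset.Ico_add_one_right_eq_Icc, Finset.sum_Ico_eq_sum_range]
  refine Finset.sum_congr rfl fun i _ => ?_
  congr 1
  · rw [show 1 + i - 1 = i by omega, ← Finset.Ico_add_one_right_eq_Icc,
      Finset.prod_Ico_eq_prod_range]
    exact Finset.prod_congr rfl fun r _ => by rw [Nat.add_comm]
  · rw [Nat.add_comm]
end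

section
/- Let N ≥ 2 and c₁,...,c_{N-1} ≥ 0, d₁,...,d_{N-1} ≥ 0 with d_{N-1} = c_{N-1}. Suppose for reals 0 < μᵢ ≤ 1, lᵢ ≥ 1 (1 ≤ i ≤ N-2): cᵢ ≥ lᵢ·dᵢ₊₁ and dᵢ ≤ cᵢ + μᵢ·dᵢ₊₁. Then for all 0 ≤ α ≤ 1, d₁^α ≤ c₁^α + K₁c₂^α + K₁K₂c₃^α + ... + K₁⋯K_{N-2}c_{N-1}^α, where Kᵣ = (μᵣ+lᵣ)^α - lᵣ^α. -/
open Finset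

private lemma anti_aux (a α : ℝ) (ha : 0 ≤ a) (hα0 : 0 ≤ α) (hα1 : α ≤ 1) :
    AntitoneOn (fun x : ℝ => (x + a) ^ α - x ^ α) (Set.Ici 0) := by
  apply antitoneOn_of_deriv_nonpos (convex_Ici 0)
  · apply ContinuousOn.sub
    · exact ((Real.continuous_rpow_const hα0).comp (continuous_id.add continuous_const)).continuousOn
    · exact (Real.continuous_rpow_const hα0).continuousOn
  · intro x hx
    rw [interior_Ici] at hx
    have hx0 : (0:ℝ) < x := hx
    have h1 : HasDerivAt (fun y : ℝ => (y + a) ^ α) (α * (x + a) ^ (α - 1) * 1) x :=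
      (Real.hasDerivAt_rpow_const (Or.inl (by positivity))).comp x
        ((hasDerivAt_id x).add_const a)
    have h2 : HasDerivAt (fun y : ℝ => y ^ α) (α * x ^ (α - 1)) x :=
      Real.hasDerivAt_rpow_const (Or.inl hx0.ne')
    exact (h1.sub h2).differentiableAt.differentiableWithinAt
  · intro x hx
    rw [interior_Ici] at hx
    have hx0 : (0:ℝ) < x := hx
    have h1 : HasDerivAt (fun y : ℝ => (y + a) ^ α) (α * (x + a) ^ (α - 1) * 1) x :=
      (Real.hasDerivAt_rpow_const (Or.inl (by positivity))).comp x
        ((hasDerivAt_id x).add_const a)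
    have h2 : HasDerivAt (fun y : ℝ => y ^ α) (α * x ^ (α - 1)) x :=
      Real.hasDerivAt_rpow_const (Or.inl hx0.ne')
    rw [(show HasDerivAt (fun y : ℝ => (y + a) ^ α - y ^ α) _ x from h1.sub h2).deriv]
    have : (x + a) ^ (α - 1) ≤ x ^ (α - 1) :=
      Real.rpow_le_rpow_of_nonpos hx0 (by linarith) (by linarith)
    nlinarith

private lemma key_step (c d e μ l α : ℝ) (hc : 0 ≤ c) (hd : 0 ≤ d) (he : 0 ≤ e)
    (hμ0 : 0 < μ) (hl : 1 ≤ l) (h1 : l * e ≤ c) (h2 : d ≤ c + μ * e)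
    (hα0 : 0 ≤ α) (hα1 : α ≤ 1) :
    d ^ α ≤ c ^ α + ((μ + l) ^ α - l ^ α) * e ^ α := by
  have hle : 0 ≤ l * e := mul_nonneg (by linarith) he
  have hstep : d ^ α ≤ (c + μ * e) ^ α := Real.rpow_le_rpow hd h2 hα0
  have hanti := anti_aux (μ * e) α (mul_nonneg hμ0.le he) hα0 hα1
    (Set.mem_Ici.mpr hle) (Set.mem_Ici.mpr hc) h1
  simp only at hanti
  have heq : (l * e + μ * e) ^ α - (l * e) ^ α = ((μ + l) ^ α - l ^ α) * e ^ α := by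
    have h3 : l * e + μ * e = (μ + l) * e := by ring
    rw [h3, Real.mul_rpow (by linarith) he, Real.mul_rpow (by linarith) he]
    ring
  rw [heq] at hanti
  linarith

theorem stmt_14 (N : ℕ) (hN : 2 ≤ N) (c d μ l : ℕ → ℝ)
    (hc : ∀ i, 1 ≤ i → i ≤ N - 1 → 0 ≤ c i)
    (hd : ∀ i, 1 ≤ i → i ≤ N - 1 → 0 ≤ d i)
    (hμ : ∀ i, 1 ≤ i → i ≤ N - 2 → 0 < μ i ∧ μ i ≤ 1)
    (hl : ∀ i, 1 ≤ i → i ≤ N - 2 → 1 ≤ l i)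
    (hlast : d (N - 1) = c (N - 1))
    (h1 : ∀ i, 1 ≤ i → i ≤ N - 2 → l i * d (i + 1) ≤ c i)
    (h2 : ∀ i, 1 ≤ i → i ≤ N - 2 → d i ≤ c i + μ i * d (i + 1))
    (α : ℝ) (hα0 : 0 ≤ α) (hα1 : α ≤ 1) :
    d 1 ^ α ≤ ∑ i ∈ Finset.Icc 1 (N - 1),
      (∏ r ∈ Finset.Icc 1 (i - 1),
        ((μ r + l r) ^ α - (l r) ^ α)) * c i ^ α := by
  set K : ℕ → ℝ := fun r => (μ r + l r) ^ α - (l r) ^ α with hK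
  have main : ∀ j k, 1 ≤ k → k ≤ N - 1 → N - 1 - k ≤ j →
      d k ^ α ≤ ∑ i ∈ Finset.Icc k (N - 1),
        (∏ r ∈ Finset.Icc k (i - 1), K r) * c i ^ α := by
    intro j
    induction j with
    | zero =>
      intro k hk1 hk2 hk3
      have hkeq : k = N - 1 := le_antisymm hk2 (by omega)
      subst hkeq
      rw [Finset.Icc_self, Finset.sum_singleton, hlast]
      have : Finset.Icc (N-1) (N-1-1) = ∅ := by
        apply Finset.Icc_eq_empty; omega
      rw [this, Finset.prod_empty, one_mul]
    | succ j ih =>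
      intro k hk1 hk2 hk3
      by_cases hcase : N - 1 - k ≤ j
      · exact ih k hk1 hk2 hcase
      · have hk2' : k ≤ N - 2 := by omega
        have hksucc : k + 1 ≤ N - 1 := by omega
        have hKnn : 0 ≤ K k := by
          have hlk := hl k hk1 hk2'
          have hμk := (hμ k hk1 hk2').1
          have : (l k) ^ α ≤ (μ k + l k) ^ α :=
            Real.rpow_le_rpow (by linarith) (by linarith) hα0
          simp only [hK]; linarith
        have hstep : d k ^ α ≤ c k ^ α + K k * d (k + 1) ^ α :=
          key_step (c k) (d k) (d (k+1)) (μ k) (l k) α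
            (hc k hk1 (by omega)) (hd k hk1 (by omega)) (hd (k+1) (by omega) hksucc)
            (hμ k hk1 hk2').1 (hl k hk1 hk2') (h1 k hk1 hk2') (h2 k hk1 hk2') hα0 hα1
        have hih : d (k+1) ^ α ≤ ∑ i ∈ Finset.Icc (k+1) (N - 1),
            (∏ r ∈ Finset.Icc (k+1) (i - 1), K r) * c i ^ α :=
          ih (k+1) (by omega) hksucc (by omega)
        have hsplit : Finset.Icc k (N - 1) = insert k (Finset.Icc (k+1) (N-1)) := by
          ext x; simp [Finset.mem_Icc, Finset.mem_insert]; omega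
        rw [hsplit, Finset.sum_insert (by simp)]
        have hempt : Finset.Icc k (k - 1) = ∅ := Finset.Icc_eq_empty (by omega)
        rw [hempt, Finset.prod_empty, one_mul]
        have hsum : ∑ i ∈ Finset.Icc (k+1) (N-1), (∏ r ∈ Finset.Icc k (i - 1), K r) * c i ^ α
            = K k * ∑ i ∈ Finset.Icc (k+1) (N-1),
                (∏ r ∈ Finset.Icc (k+1) (i - 1), K r) * c i ^ α := by
          rw [Finset.mul_sum]
          apply Finset.sum_congr rfl
          intro i hi
          rw [Finset.mem_Icc] at hi
          have : Finset.Icc k (i - 1) = insert k (Finset.Icc (k+1) (i-1)) := by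
            ext x; simp [Finset.mem_Icc, Finset.mem_insert]; omega
          rw [this, Finset.prod_insert (by simp)]
          ring
        rw [hsum]
        have := mul_le_mul_of_nonneg_left hih hKnn
        linarith
  exact main (N - 1 - 1) 1 le_rfl (by omega) le_rfl
end
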